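/- Let 0 < α < 1. Then as n → ∞, the sum ∑_{k=1}^{n} k Δ_k(α) is asymptotic to (α/(1−α)) n^(1−α). -/

import Mathlib

open Filter Topology

/-- ℓ⁺_m(α) = 1 - (m + 2^(1/α))^(-α) -/
noncomputable def ellp (α : ℝ) (m : ℕ) : ℝ := 1 - ((m : ℝ) + (2 : ℝ) ^ (1/α)) ^ (-α)

/-- Δ_k(α) = ℓ⁺_k(α) - ℓ⁺_{k-1}(α) -/
noncomputable def Dlt (α : ℝ) (k : ℕ) : ℝ := ellp α k - ellp α (k - 1)

theorem stmt_10 (α : ℝ) (hα : 0 < α) (hα1 : α < 1) :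
    Tendsto
      (fun n : ℕ =>
        (∑ k ∈ Finset.Icc 1 n, (k : ℝ) * Dlt α k) /
          ((α / (1 - α)) * (n : ℝ) ^ ((1 : ℝ) - α)))
      atTop (𝓝 1) := by
  set c : ℝ := (2 : ℝ) ^ (1/α) with hc_def
  have hc : 0 < c := Real.rpow_pos_of_pos two_pos _
  have h1α : (0:ℝ) < 1 - α := by linarith
  set g : ℝ → ℝ := fun x => (x + c) ^ (-α) with hg_def
  have hgpos : ∀ x : ℝ, 0 ≤ x → 0 < g x := fun x hx =>
    Real.rpow_pos_of_pos (by linarith) _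
  -- telescoping identity
  have key : ∀ n : ℕ, ∑ k ∈ Finset.Icc 1 n, (k : ℝ) * Dlt α k
      = (∑ k ∈ Finset.range n, g k) - n * g n := by
    intro n
    induction n with
    | zero => simp
    | succ n ih =>
      rw [Finset.sum_Icc_succ_top (by omega), ih, Finset.sum_range_succ]
      have hD : Dlt α (n+1) = g n - g (n+1) := by
        simp only [Dlt, ellp, Nat.add_sub_cancel, hg_def]
        push_cast
        ring
      rw [hD]
      push_cast
      ring
  -- antitone
  have hanti : ∀ b : ℝ, AntitoneOn g (Set.Icc (0:ℝ) b) := by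
    intro b x hx y hy hxy
    exact Real.rpow_le_rpow_of_nonpos (by linarith [hx.1]) (by linarith) (by linarith)
  -- integral value
  have hint : ∀ n : ℕ, (∫ x in (0:ℝ)..(n:ℝ), g x)
      = (((n:ℝ) + c) ^ (1 - α) - c ^ (1 - α)) / (1 - α) := by
    intro n
    have h1 : (∫ x in (0:ℝ)..(n:ℝ), g x)
        = ∫ x in (0:ℝ) + c..(n:ℝ) + c, x ^ (-α) := by
      rw [← intervalIntegral.integral_comp_add_right (fun x => x ^ (-α)) c]
    rw [h1, integral_rpow (Or.inl (by linarith))]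
    rw [zero_add]
    ring_nf
  -- limits
  have hbase : Tendsto (fun n : ℕ => 1 + c / (n:ℝ)) atTop (𝓝 1) := by
    have := tendsto_const_div_atTop_nhds_zero_nat c
    simpa using tendsto_const_nhds.add this
  have hp_top : Tendsto (fun n : ℕ => (n:ℝ) ^ ((1:ℝ) - α)) atTop atTop :=
    (tendsto_rpow_atTop h1α).comp tendsto_natCast_atTop_atTop
  have hzero : ∀ K : ℝ, Tendsto (fun n : ℕ => K / (n:ℝ) ^ ((1:ℝ) - α)) atTop (𝓝 0) :=
    fun K => tendsto_const_nhds.div_atTop hp_top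
  -- h1 : (n+c)^(1-α) / n^(1-α) → 1
  have h1 : Tendsto (fun n : ℕ => ((n:ℝ) + c) ^ ((1:ℝ) - α) / (n:ℝ) ^ ((1:ℝ) - α))
      atTop (𝓝 1) := by
    have h := hbase.rpow_const (p := 1 - α) (Or.inl one_ne_zero)
    rw [Real.one_rpow] at h
    apply h.congr' ?_
    filter_upwards [eventually_ge_atTop 1] with n hn
    have hn0 : (0:ℝ) < (n:ℝ) := by exact_mod_cast hn
    rw [← Real.div_rpow (by linarith) hn0.le]
    congr 1
    field_simp
  -- h2 : n * (n+c)^(-α) / n^(1-α) → 1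
  have h2 : Tendsto (fun n : ℕ => (n:ℝ) * ((n:ℝ) + c) ^ (-α) / (n:ℝ) ^ ((1:ℝ) - α))
      atTop (𝓝 1) := by
    have hb2 : Tendsto (fun n : ℕ => ((1 + c / (n:ℝ))⁻¹ : ℝ)) atTop (𝓝 1) := by
      simpa using hbase.inv₀ one_ne_zero
    have h := hb2.rpow_const (p := α) (Or.inl one_ne_zero)
    rw [Real.one_rpow] at h
    apply h.congr' ?_
    filter_upwards [eventually_ge_atTop 1] with n hn
    have hn0 : (0:ℝ) < (n:ℝ) := by exact_mod_cast hn
    have hnc : (0:ℝ) < (n:ℝ) + c := by linarith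
    have e1 : (1 + c / (n:ℝ))⁻¹ = (n:ℝ) / ((n:ℝ) + c) := by
      field_simp
    rw [e1, Real.div_rpow hn0.le hnc.le]
    rw [Real.rpow_neg hnc.le]
    have e2 : (n:ℝ) ^ α = (n:ℝ) / (n:ℝ) ^ ((1:ℝ) - α) := by
      rw [eq_div_iff (ne_of_gt (Real.rpow_pos_of_pos hn0 _)), ← Real.rpow_add hn0]
      norm_num
    rw [e2]
    ring
  -- main limit for S n / p n
  set S : ℕ → ℝ := fun n => (∑ k ∈ Finset.range n, g k) - n * g n with hS_def
  set p : ℕ → ℝ := fun n => (n:ℝ) ^ ((1:ℝ) - α) with hp_def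
  have hLlim : Tendsto (fun n : ℕ =>
      ((((n:ℝ) + c) ^ ((1:ℝ) - α) - c ^ ((1:ℝ) - α)) / (1 - α) - (n:ℝ) * ((n:ℝ) + c) ^ (-α)) / p n)
      atTop (𝓝 (α / (1 - α))) := by
    have := ((h1.sub (hzero (c ^ ((1:ℝ) - α)))).div_const (1 - α)).sub h2
    have hval : (1 - 0) / (1 - α) - 1 = α / (1 - α) := by
      field_simp
      ring
    rw [hval] at this
    apply this.congr
    intro n
    simp only [hp_def]
    ring
  have hUlim : Tendsto (fun n : ℕ =>
      (((((n:ℝ) + c) ^ ((1:ℝ) - α) - c ^ ((1:ℝ) - α)) / (1 - α) + c ^ (-α)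
        - (n:ℝ) * ((n:ℝ) + c) ^ (-α)) / p n))
      atTop (𝓝 (α / (1 - α))) := by
    have := hLlim.add (hzero (c ^ (-α)))
    rw [add_zero] at this
    apply this.congr
    intro n
    simp only [hp_def]
    ring
  have hmain : Tendsto (fun n : ℕ => S n / p n) atTop (𝓝 (α / (1 - α))) := by
    apply tendsto_of_tendsto_of_tendsto_of_le_of_le' hLlim hUlim
    · -- lower bound
      filter_upwards [eventually_ge_atTop 1] with n hn
      have hn0 : (0:ℝ) < (n:ℝ) := by exact_mod_cast hn
      have hppos : 0 < p n := Real.rpow_pos_of_pos hn0 _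
      apply div_le_div_of_nonneg_right ?_ hppos.le
      rw [← hint n]
      have h := (hanti ((0:ℝ) + n)).integral_le_sum (x₀ := 0) (a := n) (f := g)
      simp only [zero_add] at h
      simp only [hS_def]
      linarith
    · -- upper bound
      filter_upwards [eventually_ge_atTop 1] with n hn
      have hn0 : (0:ℝ) < (n:ℝ) := by exact_mod_cast hn
      have hppos : 0 < p n := Real.rpow_pos_of_pos hn0 _
      apply div_le_div_of_nonneg_right ?_ hppos.le
      rw [← hint n]
      have h := (hanti ((0:ℝ) + n)).sum_le_integral (x₀ := 0) (a := n) (f := g)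
      simp only [zero_add] at h
      -- ∑ k ∈ range n, g k ≤ g 0 + ∑ i ∈ range n, g (i+1)
      obtain ⟨m, rfl⟩ := Nat.exists_eq_add_of_le hn
      have hsum : ∑ k ∈ Finset.range (1 + m), g k
          = (∑ i ∈ Finset.range m, g ((i:ℕ) + 1)) + g 0 := by
        rw [add_comm 1 m, Finset.sum_range_succ']
        push_cast
        rfl
      have hle : (∑ i ∈ Finset.range m, g ((i:ℕ) + 1))
          ≤ ∑ i ∈ Finset.range (1 + m), g (((i:ℕ) + 1 : ℕ)) := by
        rw [add_comm 1 m, Finset.sum_range_succ]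
        push_cast
        have : 0 ≤ g ((m:ℝ) + 1) := (hgpos _ (by positivity)).le
        refine le_add_of_le_of_nonneg (le_of_eq ?_) this
        apply Finset.sum_congr rfl
        intro i _
        push_cast
        rfl
      have hg0 : g 0 = c ^ (-α) := by simp [hg_def]
      simp only [hS_def]
      have : ∑ k ∈ Finset.range (1 + m), g k
          ≤ (∫ x in (0:ℝ)..((1 + m : ℕ):ℝ), g x) + c ^ (-α) := by
        rw [hsum, ← hg0]
        have h' : (∑ i ∈ Finset.range (1 + m), g (((i:ℕ) + 1 : ℕ)))
            ≤ ∫ x in (0:ℝ)..((1 + m : ℕ):ℝ), g x := by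
          convert h using 2
        linarith [hle.trans h']
      linarith
  -- conclude
  have hC : α / (1 - α) ≠ 0 := by positivity
  have final := hmain.div_const (α / (1 - α))
  rw [div_self hC] at final
  apply final.congr'
  filter_upwards with n
  rw [key n]
  simp only [hS_def, hp_def]
  ring
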